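/- An allocation q solves the monopolist problem 𝒫^M if and only if q solves the cap-constrained problem 𝒫(q^M) for a quality q^M that maximizes q̂ ↦ V(q̂) − c(q̂) over q̂ ≥ 0, where V(q̂) denotes the value of 𝒫(q̂). -/

import Mathlib

open MeasureTheory Set Filter Topology

noncomputable section

/-- The virtual value `φ(θ) = θ - (1 - F(θ))/F'(θ)`. -/
def phi (F : ℝ → ℝ) (θ : ℝ) : ℝ := θ - (1 - F θ) / deriv F θ

/-- Standing hypotheses of the main model. -/
structure MainModel (F g c : ℝ → ℝ) : Prop where
  F_smooth : ContDiff ℝ 2 F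
  F_zero : F 0 = 0
  F_one : F 1 = 1
  F_mono : Monotone F
  F_density_pos : ∀ θ ∈ Icc (0:ℝ) 1, 0 < deriv F θ
  phi_mono : StrictMonoOn (phi F) (Icc (0:ℝ) 1)
  g_zero : g 0 = 0
  g_mono : StrictMonoOn g (Ici (0:ℝ))
  g_concave : StrictConcaveOn ℝ (Ici (0:ℝ)) g
  g_diff : ∀ q ∈ Ioi (0:ℝ), DifferentiableAt ℝ g q
  g_diff2 : ∀ q ∈ Ioi (0:ℝ), DifferentiableAt ℝ (deriv g) q
  c_nonneg : ∀ q : ℝ, 0 ≤ c q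
  c_mono : StrictMonoOn c (Ici (0:ℝ))
  c_convex : StrictConvexOn ℝ (Ici (0:ℝ)) c
  c_diff : ∀ q ∈ Ici (0:ℝ), DifferentiableAt ℝ c q
  inada_gtop : Tendsto (deriv g) atTop (nhds 0)
  inada_czero : deriv c 0 = 0
  inada_ctop : Tendsto (deriv c) atTop atTop
  inada_gzero : Tendsto (deriv g) (nhdsWithin 0 (Ioi 0)) atTop

/-- An allocation: a measurable map from types to (nonnegative) qualities. -/
def IsAllocation (q : ℝ → ℝ) : Prop :=
  Measurable q ∧ ∀ θ ∈ Icc (0:ℝ) 1, 0 ≤ q θ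

/-- Total welfare of an allocation. -/
def totalWelfare (F g c : ℝ → ℝ) (q : ℝ → ℝ) : ℝ :=
  (∫ θ in (0:ℝ)..1, (g (q θ) + θ * q θ) * deriv F θ) - c (sSup (q '' Icc (0:ℝ) 1))

/-- Efficiency: maximize total welfare among allocations. -/
def Efficient (F g c : ℝ → ℝ) (q : ℝ → ℝ) : Prop :=
  IsAllocation q ∧
    ∀ q' : ℝ → ℝ, IsAllocation q' → totalWelfare F g c q' ≤ totalWelfare F g c q

/-- Incentive compatibility and individual rationality of a direct mechanism. -/
def ICIR (g : ℝ → ℝ) (q t : ℝ → ℝ) : Prop :=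
  ∀ θ ∈ Icc (0:ℝ) 1,
    (∀ θ' ∈ Icc (0:ℝ) 1, g (q θ') + θ * q θ' - t θ' ≤ g (q θ) + θ * q θ - t θ) ∧
      0 ≤ g (q θ) + θ * q θ - t θ

/-- The profit of the seller from a mechanism. -/
def profit (F c : ℝ → ℝ) (q t : ℝ → ℝ) : ℝ :=
  (∫ θ in (0:ℝ)..1, t θ * deriv F θ) - c (sSup (q '' Icc (0:ℝ) 1))

/-- A monopolist allocation: part of a profit-maximizing IC-IR mechanism. -/
def Monopolist (F g c : ℝ → ℝ) (q : ℝ → ℝ) : Prop :=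
  ∃ t : ℝ → ℝ, IsAllocation q ∧ ICIR g q t ∧
    ∀ q' t' : ℝ → ℝ, IsAllocation q' → ICIR g q' t' →
      profit F c q' t' ≤ profit F c q t

/-- The virtual surplus of an allocation. -/
def virtSurplus (F g : ℝ → ℝ) (q : ℝ → ℝ) : ℝ :=
  ∫ θ in (0:ℝ)..1, (g (q θ) + phi F θ * q θ) * deriv F θ

/-- Feasibility in the cap-constrained problem `𝒫(qcap)`. -/
def FeasibleCap (qcap : ℝ) (q : ℝ → ℝ) : Prop :=
  IsAllocation q ∧ MonotoneOn q (Icc (0:ℝ) 1) ∧ ∀ θ ∈ Icc (0:ℝ) 1, q θ ≤ qcap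

/-- The value `V(qcap)` of the cap-constrained problem `𝒫(qcap)`. -/
def Vval (F g : ℝ → ℝ) (qcap : ℝ) : ℝ :=
  sSup {v | ∃ q : ℝ → ℝ, FeasibleCap qcap q ∧ v = virtSurplus F g q}

/-- Solving the cap-constrained problem `𝒫(qcap)`. -/
def SolvesCap (F g : ℝ → ℝ) (qcap : ℝ) (q : ℝ → ℝ) : Prop :=
  FeasibleCap qcap q ∧
    ∀ q' : ℝ → ℝ, FeasibleCap qcap q' → virtSurplus F g q' ≤ virtSurplus F g q

/-- The virtual-surplus maximizer `β`, taking the value `⊤` where `φ(θ) ≥ 0`. -/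
def IsVSMax (F g : ℝ → ℝ) (βe : ℝ → EReal) : Prop :=
  ∀ θ ∈ Icc (0:ℝ) 1,
    (0 ≤ phi F θ → βe θ = ⊤) ∧
    (phi F θ < 0 → ∃ qb : ℝ, βe θ = (qb : EReal) ∧ 0 ≤ qb ∧
      ∀ q' : ℝ, 0 ≤ q' → g q' + phi F θ * q' ≤ g qb + phi F θ * qb)

/-- The generalized inverse `b` of the virtual-surplus maximizer. -/
def bfun (βe : ℝ → EReal) (q : ℝ) : ℝ :=
  sInf {θ ∈ Icc (0:ℝ) 1 | (q : EReal) ≤ βe θ}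

namespace Stmt1Aux

def proj01 (θ : ℝ) : ℝ := max 0 (min θ 1)

lemma proj01_mem (θ : ℝ) : proj01 θ ∈ Icc (0:ℝ) 1 :=
  ⟨le_max_left _ _, max_le zero_le_one (min_le_right _ _)⟩

lemma proj01_monotone : Monotone proj01 :=
  fun _ _ h => max_le_max le_rfl (min_le_min h le_rfl)

lemma proj01_eq {θ : ℝ} (h : θ ∈ Icc (0:ℝ) 1) : proj01 θ = θ := by
  simp [proj01, min_eq_left h.2, max_eq_right h.1]

def Qb (q : ℝ → ℝ) (θ : ℝ) : ℝ := q (proj01 θ)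

variable {F g c q t : ℝ → ℝ}

lemma Qb_eqOn : EqOn (Qb q) q (Icc (0:ℝ) 1) := fun θ h => by rw [Qb, proj01_eq h]

lemma Qb_monotone (hmono : MonotoneOn q (Icc (0:ℝ) 1)) : Monotone (Qb q) :=
  fun a b h => hmono (proj01_mem a) (proj01_mem b) (proj01_monotone h)

lemma icir_mono (hic : ICIR g q t) : MonotoneOn q (Icc (0:ℝ) 1) := by
  intro a ha b hb hab
  rcases eq_or_lt_of_le hab with rfl | h
  · exact le_rfl
  · have h1 := (hic a ha).1 b hb
    have h2 := (hic b hb).1 a ha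
    nlinarith [h1, h2]

lemma util_eq (hic : ICIR g q t) {θ : ℝ} (hθ : θ ∈ Icc (0:ℝ) 1) :
    g (q θ) + θ * q θ - t θ
      = (g (q 0) + 0 * q 0 - t 0) + ∫ s in (0:ℝ)..θ, Qb q s := by
  have hmono : MonotoneOn q (Icc (0:ℝ) 1) := icir_mono hic
  have hQm : Monotone (Qb q) := Qb_monotone hmono
  set U : ℝ → ℝ := fun x => g (q x) + x * q x - t x with hUdef
  have hU : ∀ a ∈ Icc (0:ℝ) 1, ∀ b ∈ Icc (0:ℝ) 1, U a + (b - a) * q a ≤ U b := by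
    intro a ha b hb
    have h := (hic b hb).1 a ha
    simp only [hUdef]
    nlinarith [h]
  set h : ℝ → ℝ := fun x => U x - U 0 - ∫ s in (0:ℝ)..x, Qb q s with hhdef
  have hQint : ∀ a b : ℝ, IntervalIntegrable (Qb q) volume a b :=
    fun a b => hQm.intervalIntegrable
  have key : ∀ a ∈ Icc (0:ℝ) 1, ∀ b ∈ Icc (0:ℝ) 1, a ≤ b →
      |h b - h a| ≤ (Qb q b - Qb q a) * (b - a) := by
    intro a ha' b hb' hab
    have hadd := intervalIntegral.integral_add_adjacent_intervals (hQint 0 a) (hQint a b)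
    have hsub : h b - h a = (U b - U a) - ∫ s in a..b, Qb q s := by
      simp only [hhdef]; linarith [hadd]
    have hconst1 : ∫ _s in a..b, Qb q a = (b - a) * Qb q a := by
      simp [intervalIntegral.integral_const]
    have hconst2 : ∫ _s in a..b, Qb q b = (b - a) * Qb q b := by
      simp [intervalIntegral.integral_const]
    have hi1 : (b - a) * Qb q a ≤ ∫ s in a..b, Qb q s := by
      rw [← hconst1]
      exact intervalIntegral.integral_mono_on hab intervalIntegrable_const (hQint a b)
        (fun x hx => hQm hx.1)
    have hi2 : (∫ s in a..b, Qb q s) ≤ (b - a) * Qb q b := by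
      rw [← hconst2]
      exact intervalIntegral.integral_mono_on hab (hQint a b) intervalIntegrable_const
        (fun x hx => hQm hx.2)
    have hu1 : U a + (b - a) * q a ≤ U b := hU a ha' b hb'
    have hu2 : U b + (a - b) * q b ≤ U a := hU b hb' a ha'
    have hqa : Qb q a = q a := Qb_eqOn ha'
    have hqb : Qb q b = q b := Qb_eqOn hb'
    rw [hsub, abs_le]
    constructor <;> nlinarith
  have hθ0 := hθ.1
  have hθ1 := hθ.2
  have main : ∀ n : ℕ, 0 < n → |h θ| ≤ (Qb q θ - Qb q 0) * θ / n := by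
    intro n hn
    have hnpos : (0:ℝ) < n := by exact_mod_cast hn
    have step : ∀ i : ℕ, i ≤ n →
        |h ((i : ℝ) * θ / n)| ≤ (Qb q ((i : ℝ) * θ / n) - Qb q 0) * (θ / n) := by
      intro i
      induction i with
      | zero =>
        intro _
        simp [hhdef, intervalIntegral.integral_same]
      | succ i ih =>
        intro hin
        have hi : i ≤ n := Nat.le_of_succ_le hin
        set a : ℝ := (i : ℝ) * θ / n with hadef
        set b : ℝ := ((i + 1 : ℕ) : ℝ) * θ / n with hbdef
        have hia : (i:ℝ) ≤ (n:ℝ) := by exact_mod_cast hi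
        have hib : (i:ℝ) + 1 ≤ (n:ℝ) := by exact_mod_cast hin
        have hmul : (i:ℝ) * θ ≤ ((i+1:ℕ):ℝ) * θ := by
          push_cast; nlinarith
        have hab : a ≤ b := by
          rw [hadef, hbdef]; gcongr
        have haθ : a ≤ θ := by
          rw [hadef, div_le_iff₀ hnpos]
          nlinarith [mul_nonneg (sub_nonneg.mpr hia) hθ0]
        have hbθ : b ≤ θ := by
          rw [hbdef, div_le_iff₀ hnpos]; push_cast
          nlinarith [mul_nonneg (sub_nonneg.mpr hib) hθ0]
        have ha0 : 0 ≤ a := by positivity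
        have hb0 : 0 ≤ b := by positivity
        have haIcc : a ∈ Icc (0:ℝ) 1 := ⟨ha0, haθ.trans hθ1⟩
        have hbIcc : b ∈ Icc (0:ℝ) 1 := ⟨hb0, hbθ.trans hθ1⟩
        have hba : b - a = θ / n := by rw [hadef, hbdef]; push_cast; ring
        have hk := key a haIcc b hbIcc hab
        have ihp := ih hi
        calc |h b| = |h a + (h b - h a)| := by ring_nf
          _ ≤ |h a| + |h b - h a| := abs_add_le _ _
          _ ≤ (Qb q a - Qb q 0) * (θ / n) + (Qb q b - Qb q a) * (b - a) := by
              exact add_le_add ihp hk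
          _ = (Qb q b - Qb q 0) * (θ / n) := by rw [hba]; ring
    have := step n le_rfl
    have hnn : (n:ℝ) * θ / n = θ := by field_simp
    rw [hnn] at this
    calc |h θ| ≤ (Qb q θ - Qb q 0) * (θ / n) := this
      _ = (Qb q θ - Qb q 0) * θ / n := by ring
  have hzero : h θ = 0 := by
    have hC : Tendsto (fun n : ℕ => (Qb q θ - Qb q 0) * θ / n) atTop (nhds 0) :=
      tendsto_const_div_atTop_nhds_zero_nat _
    have hle : |h θ| ≤ 0 :=
      ge_of_tendsto hC (eventually_atTop.2 ⟨1, fun n hn => main n hn⟩)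
    have := abs_nonneg (h θ)
    have : |h θ| = 0 := le_antisymm hle this
    exact abs_eq_zero.mp this
  have : U θ - U 0 - (∫ s in (0:ℝ)..θ, Qb q s) = 0 := hzero
  simp only [hUdef] at this
  linarith


lemma abs_le_max_of_monotone {r : ℝ → ℝ} (hmono : Monotone r) {s : ℝ}
    (hs : s ∈ Icc (0:ℝ) 1) : |r s| ≤ max |r 0| |r 1| := by
  have h1 : r 0 ≤ r s := hmono hs.1
  have h2 : r s ≤ r 1 := hmono hs.2
  rw [abs_le]
  constructor
  · calc -(max |r 0| |r 1|) ≤ -|r 0| := neg_le_neg (le_max_left _ _)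
      _ ≤ r 0 := neg_abs_le _
      _ ≤ r s := h1
  · exact h2.trans ((le_abs_self _).trans (le_max_right _ _))

lemma intInt01 {f : ℝ → ℝ} (hf : Measurable f) {C : ℝ}
    (hC : ∀ θ ∈ Icc (0:ℝ) 1, |f θ| ≤ C) : IntervalIntegrable f volume 0 1 := by
  rw [intervalIntegrable_iff_integrableOn_Ioc_of_le zero_le_one]
  have hfin : volume (Ioc (0:ℝ) 1) < ⊤ := measure_Ioc_lt_top
  apply Integrable.mono' (g := fun _ => C)
  · exact (integrableOn_const_iff).mpr (Or.inr hfin)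
  · exact hf.aestronglyMeasurable.restrict
  · exact ae_restrict_of_forall_mem measurableSet_Ioc fun x hx => by
      simpa using hC x ⟨le_of_lt hx.1, hx.2⟩

lemma fubini_aux {F : ℝ → ℝ} (hF' : Continuous (deriv F))
    (hFd : ∀ x : ℝ, DifferentiableAt ℝ F x)
    {r : ℝ → ℝ} (hrm : Measurable r) (hmono : Monotone r) :
    ∫ θ in (0:ℝ)..1, (∫ s in (0:ℝ)..θ, r s) * deriv F θ
      = ∫ s in (0:ℝ)..1, r s * (F 1 - F s) := by
  haveI : Fact (volume (Ioc (0:ℝ) 1) < ⊤) := ⟨measure_Ioc_lt_top⟩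
  set μ := volume.restrict (Ioc (0:ℝ) 1) with hμ
  set S : Set (ℝ × ℝ) := {p : ℝ × ℝ | p.2 ≤ p.1} with hSdef
  set f : ℝ × ℝ → ℝ := S.indicator (fun p => r p.2 * deriv F p.1) with hfdef
  have hSm : MeasurableSet S := measurableSet_le measurable_snd measurable_fst
  have hfm : Measurable f :=
    ((hrm.comp measurable_snd).mul (hF'.measurable.comp measurable_fst)).indicator hSm
  obtain ⟨K, hK⟩ := (isCompact_Icc : IsCompact (Icc (0:ℝ) 1)).exists_bound_of_continuousOn
    hF'.continuousOn
  set Cr := max |r 0| |r 1| with hCr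
  have hCr0 : 0 ≤ Cr := (abs_nonneg _).trans (le_max_left _ _)
  have hintf : Integrable f (μ.prod μ) := by
    apply Integrable.mono' (integrable_const (Cr * K)) hfm.aestronglyMeasurable
    rw [hμ, Measure.prod_restrict]
    refine ae_restrict_of_forall_mem (measurableSet_Ioc.prod measurableSet_Ioc) ?_
    rintro ⟨θ, s⟩ ⟨hθ, hs⟩
    have h1 : ‖f (θ, s)‖ ≤ ‖r s * deriv F θ‖ := norm_indicator_le_norm_self _ _
    have hsI : s ∈ Icc (0:ℝ) 1 := ⟨hs.1.le, hs.2⟩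
    have hθI : θ ∈ Icc (0:ℝ) 1 := ⟨hθ.1.le, hθ.2⟩
    have hKθ : |deriv F θ| ≤ K := by simpa using hK θ hθI
    calc ‖f (θ, s)‖ ≤ |r s| * |deriv F θ| := by
          simpa [Real.norm_eq_abs, abs_mul] using h1
      _ ≤ Cr * K := mul_le_mul (abs_le_max_of_monotone hmono hsI) hKθ (abs_nonneg _) hCr0
  have step2 : ∀ θ ∈ Ioc (0:ℝ) 1,
      (∫ s in (0:ℝ)..θ, r s) * deriv F θ = ∫ s, f (θ, s) ∂μ := by
    intro θ hθ
    have h1 : ∀ x : ℝ, f (θ, x) = (Iic θ).indicator (fun x => r x * deriv F θ) x := by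
      intro x
      by_cases h : x ≤ θ <;>
        simp [hfdef, hSdef, Set.indicator_apply, h]
    simp only [h1]
    rw [hμ, setIntegral_indicator measurableSet_Iic]
    have h2 : Ioc (0:ℝ) 1 ∩ Iic θ = Ioc 0 θ := by
      rw [Ioc_inter_Iic, inf_eq_right.mpr hθ.2]
    rw [h2, intervalIntegral.integral_of_le hθ.1.le]
    exact (integral_mul_const _ _).symm
  have step4 : ∀ s ∈ Ioc (0:ℝ) 1, (∫ θ, f (θ, s) ∂μ) = r s * (F 1 - F s) := by
    intro s hs
    have h1 : ∀ θ : ℝ, f (θ, s) = (Ici s).indicator (fun θ => r s * deriv F θ) θ := by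
      intro θ
      by_cases h : s ≤ θ <;>
        simp [hfdef, hSdef, Set.indicator_apply, h]
    simp only [h1]
    rw [hμ, setIntegral_indicator measurableSet_Ici]
    have h2 : Ioc (0:ℝ) 1 ∩ Ici s = Icc s 1 := by
      ext θ
      simp only [mem_inter_iff, mem_Ioc, mem_Ici, mem_Icc]
      constructor
      · rintro ⟨⟨_, hb⟩, hc⟩; exact ⟨hc, hb⟩
      · rintro ⟨hb, hc⟩; exact ⟨⟨lt_of_lt_of_le hs.1 hb, hc⟩, hb⟩
    rw [h2, integral_Icc_eq_integral_Ioc, ← intervalIntegral.integral_of_le hs.2,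
      intervalIntegral.integral_const_mul,
      intervalIntegral.integral_deriv_eq_sub (fun x _ => hFd x) (hF'.intervalIntegrable _ _)]
  rw [intervalIntegral.integral_of_le zero_le_one, intervalIntegral.integral_of_le zero_le_one]
  calc ∫ θ in Ioc (0:ℝ) 1, (∫ s in (0:ℝ)..θ, r s) * deriv F θ
      = ∫ θ in Ioc (0:ℝ) 1, (∫ s, f (θ, s) ∂μ) :=
        setIntegral_congr_fun measurableSet_Ioc step2
    _ = ∫ θ, (∫ s, f (θ, s) ∂μ) ∂μ := by rw [hμ]
    _ = ∫ s, (∫ θ, f (θ, s) ∂μ) ∂μ := integral_integral_swap hintf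
    _ = ∫ s in Ioc (0:ℝ) 1, (∫ θ, f (θ, s) ∂μ) := by rw [hμ]
    _ = ∫ s in Ioc (0:ℝ) 1, r s * (F 1 - F s) :=
        setIntegral_congr_fun measurableSet_Ioc step4


variable {F g c : ℝ → ℝ}

lemma revenue_eq (hM : MainModel F g c) {q t : ℝ → ℝ} (ha : IsAllocation q)
    (hic : ICIR g q t) :
    ∫ θ in (0:ℝ)..1, t θ * deriv F θ
      = virtSurplus F g q - (g (q 0) + 0 * q 0 - t 0) := by
  have hmono : MonotoneOn q (Icc (0:ℝ) 1) := icir_mono hic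
  have hQm : Monotone (Qb q) := Qb_monotone hmono
  have hQmeas : Measurable (Qb q) := hQm.measurable
  have hF' : Continuous (deriv F) := hM.F_smooth.continuous_deriv one_le_two
  have hFd : ∀ x : ℝ, DifferentiableAt ℝ F x :=
    fun x => (hM.F_smooth.differentiable two_ne_zero).differentiableAt
  have hFc : Continuous F := hM.F_smooth.continuous
  have hQnn : ∀ x : ℝ, 0 ≤ Qb q x := fun x => ha.2 _ (proj01_mem x)
  have hgQmono : Monotone (fun x => g (Qb q x)) :=
    fun a b hab => hM.g_mono.monotoneOn (hQnn a) (hQnn b) (hQm hab)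
  have hφmeas : Measurable (phi F) :=
    measurable_id.sub ((measurable_const.sub hFc.measurable).div (measurable_deriv F))
  have hφcont : ContinuousOn (phi F) (Icc (0:ℝ) 1) :=
    continuousOn_id.sub (((continuous_const.sub hFc).continuousOn).div hF'.continuousOn
      (fun x hx => (hM.F_density_pos x hx).ne'))
  obtain ⟨Cφ, hCφ⟩ := (isCompact_Icc : IsCompact (Icc (0:ℝ) 1)).exists_bound_of_continuousOn hφcont
  obtain ⟨K, hK⟩ := (isCompact_Icc : IsCompact (Icc (0:ℝ) 1)).exists_bound_of_continuousOn
    hF'.continuousOn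
  have hK' : ∀ x ∈ Icc (0:ℝ) 1, |deriv F x| ≤ K := by simpa [Real.norm_eq_abs] using hK
  have hCφ' : ∀ x ∈ Icc (0:ℝ) 1, |phi F x| ≤ Cφ := by simpa [Real.norm_eq_abs] using hCφ
  have hK0 : 0 ≤ K := (abs_nonneg _).trans (hK' 0 (by norm_num))
  have hCφ0 : 0 ≤ Cφ := (abs_nonneg _).trans (hCφ' 0 (by norm_num))
  set CQ := max |Qb q 0| |Qb q 1| with hCQ
  have hCQ0 : 0 ≤ CQ := (abs_nonneg _).trans (le_max_left _ _)
  have hQb : ∀ x ∈ Icc (0:ℝ) 1, |Qb q x| ≤ CQ := fun x hx => abs_le_max_of_monotone hQm hx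
  set CgQ := max |g (Qb q 0)| |g (Qb q 1)| with hCgQ
  have hgQb : ∀ x ∈ Icc (0:ℝ) 1, |g (Qb q x)| ≤ CgQ :=
    fun x hx => abs_le_max_of_monotone hgQmono hx
  set U0 : ℝ := g (q 0) + 0 * q 0 - t 0 with hU0
  set P : ℝ → ℝ := fun θ => ∫ s in (0:ℝ)..θ, Qb q s with hP
  have hPc : Continuous P :=
    intervalIntegral.continuous_primitive (fun a b => hQm.intervalIntegrable) 0
  set f1 : ℝ → ℝ := fun θ => (g (Qb q θ) + phi F θ * Qb q θ) * deriv F θ with hf1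
  set f2 : ℝ → ℝ := fun θ => (θ - phi F θ) * (Qb q θ * deriv F θ) with hf2
  have I1 : IntervalIntegrable f1 volume 0 1 := by
    apply intInt01 ((hgQmono.measurable.add (hφmeas.mul hQmeas)).mul hF'.measurable)
      (C := (CgQ + Cφ * CQ) * K)
    intro θ hθ
    show |(g (Qb q θ) + phi F θ * Qb q θ) * deriv F θ| ≤ _
    rw [abs_mul]
    have h1 : |g (Qb q θ) + phi F θ * Qb q θ| ≤ CgQ + Cφ * CQ := by
      calc |g (Qb q θ) + phi F θ * Qb q θ| ≤ |g (Qb q θ)| + |phi F θ| * |Qb q θ| := by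
            rw [← abs_mul]; exact abs_add_le _ _
        _ ≤ CgQ + Cφ * CQ :=
            add_le_add (hgQb θ hθ) (mul_le_mul (hCφ' θ hθ) (hQb θ hθ) (abs_nonneg _) hCφ0)
    exact mul_le_mul h1 (hK' θ hθ) (abs_nonneg _) (le_trans (abs_nonneg _) h1)
  have I2 : IntervalIntegrable f2 volume 0 1 := by
    apply intInt01 ((measurable_id.sub hφmeas).mul (hQmeas.mul hF'.measurable))
      (C := (1 + Cφ) * (CQ * K))
    intro θ hθ
    show |(θ - phi F θ) * (Qb q θ * deriv F θ)| ≤ _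
    rw [abs_mul]
    have h1 : |θ - phi F θ| ≤ 1 + Cφ := by
      calc |θ - phi F θ| ≤ |θ| + |phi F θ| := abs_sub _ _
        _ ≤ 1 + Cφ := add_le_add (abs_le.mpr ⟨by linarith [hθ.1], hθ.2⟩) (hCφ' θ hθ)
    have h2 : |Qb q θ * deriv F θ| ≤ CQ * K := by
      rw [abs_mul]
      exact mul_le_mul (hQb θ hθ) (hK' θ hθ) (abs_nonneg _) hCQ0
    exact mul_le_mul h1 h2 (abs_nonneg _) (by positivity)
  have I3 : IntervalIntegrable (fun θ => U0 * deriv F θ) volume 0 1 :=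
    (continuous_const.mul hF').intervalIntegrable 0 1
  have I4 : IntervalIntegrable (fun θ => P θ * deriv F θ) volume 0 1 :=
    ((hPc.mul hF').intervalIntegrable 0 1)
  -- rewrite t on Icc
  have hEq : EqOn (fun θ => t θ * deriv F θ)
      (fun θ => f1 θ + f2 θ - (U0 * deriv F θ) - P θ * deriv F θ) (uIcc (0:ℝ) 1) := by
    rw [uIcc_of_le zero_le_one]
    intro θ hθ
    have h := util_eq hic hθ
    have hq : Qb q θ = q θ := Qb_eqOn hθ
    have ht : t θ = g (q θ) + θ * q θ - U0 - P θ := by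
      rw [hU0, hP]; dsimp only; linarith [h]
    simp only [hf1, hf2, ht, hq]
    ring
  rw [intervalIntegral.integral_congr hEq]
  rw [intervalIntegral.integral_sub ((I1.add I2).sub I3) I4,
    intervalIntegral.integral_sub (I1.add I2) I3,
    intervalIntegral.integral_add I1 I2]
  -- compute the pieces
  have e3 : ∫ θ in (0:ℝ)..1, U0 * deriv F θ = U0 := by
    rw [intervalIntegral.integral_const_mul,
      intervalIntegral.integral_deriv_eq_sub (fun x _ => hFd x) (hF'.intervalIntegrable 0 1),
      hM.F_one, hM.F_zero]
    ring
  have e4 : ∫ θ in (0:ℝ)..1, P θ * deriv F θ = ∫ s in (0:ℝ)..1, Qb q s * (F 1 - F s) := by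
    rw [hP]
    exact fubini_aux hF' hFd hQmeas hQm
  have e2 : ∫ θ in (0:ℝ)..1, f2 θ = ∫ s in (0:ℝ)..1, Qb q s * (F 1 - F s) := by
    apply intervalIntegral.integral_congr
    rw [uIcc_of_le zero_le_one]
    intro θ hθ
    have hne : deriv F θ ≠ 0 := (hM.F_density_pos θ hθ).ne'
    simp only [hf2, phi, hM.F_one]
    field_simp
    ring
  have e1 : ∫ θ in (0:ℝ)..1, f1 θ = virtSurplus F g q := by
    apply intervalIntegral.integral_congr
    rw [uIcc_of_le zero_le_one]
    intro θ hθ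
    simp only [hf1, Qb_eqOn hθ]
  rw [e1, e2, e3, e4]
  ring


lemma mem01_0 : (0:ℝ) ∈ Icc (0:ℝ) 1 := ⟨le_rfl, zero_le_one⟩
lemma mem01_1 : (1:ℝ) ∈ Icc (0:ℝ) 1 := ⟨zero_le_one, le_rfl⟩

lemma img_bddAbove {q : ℝ → ℝ} (hmono : MonotoneOn q (Icc (0:ℝ) 1)) :
    BddAbove (q '' Icc (0:ℝ) 1) := by
  refine ⟨q 1, ?_⟩
  rintro y ⟨θ, hθ, rfl⟩
  exact hmono hθ mem01_1 hθ.2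

lemma le_sSup_img {q : ℝ → ℝ} (hmono : MonotoneOn q (Icc (0:ℝ) 1)) {θ : ℝ}
    (hθ : θ ∈ Icc (0:ℝ) 1) : q θ ≤ sSup (q '' Icc (0:ℝ) 1) :=
  le_csSup (img_bddAbove hmono) ⟨θ, hθ, rfl⟩

lemma sSup_img_le {q : ℝ → ℝ} {m : ℝ} (h : ∀ θ ∈ Icc (0:ℝ) 1, q θ ≤ m) :
    sSup (q '' Icc (0:ℝ) 1) ≤ m := by
  apply csSup_le ⟨q 0, mem_image_of_mem _ mem01_0⟩
  rintro y ⟨θ, hθ, rfl⟩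
  exact h θ hθ

lemma sSup_img_nonneg {q : ℝ → ℝ} (ha : IsAllocation q)
    (hmono : MonotoneOn q (Icc (0:ℝ) 1)) : 0 ≤ sSup (q '' Icc (0:ℝ) 1) :=
  le_trans (ha.2 0 mem01_0) (le_sSup_img hmono mem01_0)

lemma c_le (hM : MainModel F g c) {a b : ℝ} (ha : 0 ≤ a) (hab : a ≤ b) : c a ≤ c b :=
  hM.c_mono.monotoneOn (mem_Ici.mpr ha) (mem_Ici.mpr (ha.trans hab)) hab

lemma envelope (hM : MainModel F g c) {q : ℝ → ℝ} (ha : IsAllocation q)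
    (hmono : MonotoneOn q (Icc (0:ℝ) 1)) :
    ∃ t : ℝ → ℝ, ICIR g q t ∧
      (∫ θ in (0:ℝ)..1, t θ * deriv F θ) = virtSurplus F g q := by
  have hQm : Monotone (Qb q) := Qb_monotone hmono
  have hQint : ∀ a b : ℝ, IntervalIntegrable (Qb q) volume a b :=
    fun a b => hQm.intervalIntegrable
  have hQnn : ∀ x : ℝ, 0 ≤ Qb q x := fun x => ha.2 _ (proj01_mem x)
  set t : ℝ → ℝ := fun θ => g (Qb q θ) + θ * Qb q θ - ∫ s in (0:ℝ)..θ, Qb q s with htdef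
  have hic : ICIR g q t := by
    intro θ hθ
    have hqθ : Qb q θ = q θ := Qb_eqOn hθ
    have hself : g (q θ) + θ * q θ - t θ = ∫ s in (0:ℝ)..θ, Qb q s := by
      simp only [htdef, hqθ]; ring
    constructor
    · intro θ' hθ'
      have hqθ' : Qb q θ' = q θ' := Qb_eqOn hθ'
      have hdev : g (q θ') + θ * q θ' - t θ' =
          (θ - θ') * Qb q θ' + ∫ s in (0:ℝ)..θ', Qb q s := by
        simp only [htdef, hqθ']; ring
      rw [hdev, hself]
      have hsplit : (∫ s in (0:ℝ)..θ, Qb q s)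
          = (∫ s in (0:ℝ)..θ', Qb q s) + ∫ s in θ'..θ, Qb q s :=
        (intervalIntegral.integral_add_adjacent_intervals (hQint 0 θ') (hQint θ' θ)).symm
      rw [hsplit]
      have hkey : (θ - θ') * Qb q θ' ≤ ∫ s in θ'..θ, Qb q s := by
        rcases le_total θ' θ with h | h
        · have hc : (θ - θ') * Qb q θ' = ∫ _s in θ'..θ, Qb q θ' := by
            simp [intervalIntegral.integral_const]
          rw [hc]
          exact intervalIntegral.integral_mono_on h intervalIntegrable_const (hQint θ' θ)
            (fun x hx => hQm hx.1)
        · rw [intervalIntegral.integral_symm]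
          have hc : (θ' - θ) * Qb q θ' = ∫ _s in θ..θ', Qb q θ' := by
            simp [intervalIntegral.integral_const]
          have h2 : (∫ s in θ..θ', Qb q s) ≤ (θ' - θ) * Qb q θ' := by
            rw [hc]
            exact intervalIntegral.integral_mono_on h (hQint θ θ') intervalIntegrable_const
              (fun x hx => hQm hx.2)
          linarith
      linarith
    · rw [hself]
      exact intervalIntegral.integral_nonneg hθ.1 (fun x _ => hQnn x)
  refine ⟨t, hic, ?_⟩
  rw [revenue_eq hM ha hic]
  have h0 : g (q 0) + 0 * q 0 - t 0 = 0 := by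
    have hq0 : Qb q 0 = q 0 := Qb_eqOn mem01_0
    simp [htdef, hq0, intervalIntegral.integral_same]
  rw [h0]; ring

lemma virt_integrable (hM : MainModel F g c) {q : ℝ → ℝ} (ha : IsAllocation q)
    (hmono : MonotoneOn q (Icc (0:ℝ) 1)) :
    IntervalIntegrable (fun θ => (g (q θ) + phi F θ * q θ) * deriv F θ) volume 0 1 := by
  have hQm : Monotone (Qb q) := Qb_monotone hmono
  have hQmeas : Measurable (Qb q) := hQm.measurable
  have hF' : Continuous (deriv F) := hM.F_smooth.continuous_deriv one_le_two
  have hFc : Continuous F := hM.F_smooth.continuous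
  have hQnn : ∀ x : ℝ, 0 ≤ Qb q x := fun x => ha.2 _ (proj01_mem x)
  have hgQmono : Monotone (fun x => g (Qb q x)) :=
    fun a b hab => hM.g_mono.monotoneOn (hQnn a) (hQnn b) (hQm hab)
  have hφmeas : Measurable (phi F) :=
    measurable_id.sub ((measurable_const.sub hFc.measurable).div (measurable_deriv F))
  have hφcont : ContinuousOn (phi F) (Icc (0:ℝ) 1) :=
    continuousOn_id.sub (((continuous_const.sub hFc).continuousOn).div hF'.continuousOn
      (fun x hx => (hM.F_density_pos x hx).ne'))
  obtain ⟨Cφ, hCφ⟩ := (isCompact_Icc : IsCompact (Icc (0:ℝ) 1)).exists_bound_of_continuousOn hφcont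
  obtain ⟨K, hK⟩ := (isCompact_Icc : IsCompact (Icc (0:ℝ) 1)).exists_bound_of_continuousOn
    hF'.continuousOn
  have hK' : ∀ x ∈ Icc (0:ℝ) 1, |deriv F x| ≤ K := by simpa [Real.norm_eq_abs] using hK
  have hCφ' : ∀ x ∈ Icc (0:ℝ) 1, |phi F x| ≤ Cφ := by simpa [Real.norm_eq_abs] using hCφ
  have hCφ0 : 0 ≤ Cφ := (abs_nonneg _).trans (hCφ' 0 mem01_0)
  set CQ := max |Qb q 0| |Qb q 1| with hCQ
  have hCQ0 : 0 ≤ CQ := (abs_nonneg _).trans (le_max_left _ _)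
  have hQb : ∀ x ∈ Icc (0:ℝ) 1, |Qb q x| ≤ CQ := fun x hx => abs_le_max_of_monotone hQm hx
  set CgQ := max |g (Qb q 0)| |g (Qb q 1)| with hCgQ
  have hgQb : ∀ x ∈ Icc (0:ℝ) 1, |g (Qb q x)| ≤ CgQ :=
    fun x hx => abs_le_max_of_monotone hgQmono hx
  have I1 : IntervalIntegrable (fun θ => (g (Qb q θ) + phi F θ * Qb q θ) * deriv F θ) volume 0 1 := by
    apply intInt01 ((hgQmono.measurable.add (hφmeas.mul hQmeas)).mul hF'.measurable)
      (C := (CgQ + Cφ * CQ) * K)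
    intro θ hθ
    show |(g (Qb q θ) + phi F θ * Qb q θ) * deriv F θ| ≤ _
    rw [abs_mul]
    have h1 : |g (Qb q θ) + phi F θ * Qb q θ| ≤ CgQ + Cφ * CQ := by
      calc |g (Qb q θ) + phi F θ * Qb q θ| ≤ |g (Qb q θ)| + |phi F θ| * |Qb q θ| := by
            rw [← abs_mul]; exact abs_add_le _ _
        _ ≤ CgQ + Cφ * CQ :=
            add_le_add (hgQb θ hθ) (mul_le_mul (hCφ' θ hθ) (hQb θ hθ) (abs_nonneg _) hCφ0)
    exact mul_le_mul h1 (hK' θ hθ) (abs_nonneg _) (le_trans (abs_nonneg _) h1)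
  rw [intervalIntegrable_iff_integrableOn_Ioc_of_le zero_le_one] at I1 ⊢
  apply I1.congr_fun ?_ measurableSet_Ioc
  intro θ hθ
  have : Qb q θ = q θ := Qb_eqOn ⟨hθ.1.le, hθ.2⟩
  simp only [this]

lemma virtset_nonempty {qc : ℝ} (hqc : 0 ≤ qc) :
    {v | ∃ q : ℝ → ℝ, FeasibleCap qc q ∧ v = virtSurplus F g q}.Nonempty := by
  refine ⟨virtSurplus F g (fun _ => 0), (fun _ => 0), ⟨⟨measurable_const, fun _ _ => le_rfl⟩,
    fun _ _ _ _ _ => le_rfl, fun _ _ => hqc⟩, rfl⟩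

lemma bddAbove_virtSet (hM : MainModel F g c) {qc : ℝ} (hqc : 0 ≤ qc) :
    BddAbove {v | ∃ q : ℝ → ℝ, FeasibleCap qc q ∧ v = virtSurplus F g q} := by
  have hF' : Continuous (deriv F) := hM.F_smooth.continuous_deriv one_le_two
  have hFd : ∀ x : ℝ, DifferentiableAt ℝ F x :=
    fun x => (hM.F_smooth.differentiable two_ne_zero).differentiableAt
  have hFc : Continuous F := hM.F_smooth.continuous
  have hφcont : ContinuousOn (phi F) (Icc (0:ℝ) 1) :=
    continuousOn_id.sub (((continuous_const.sub hFc).continuousOn).div hF'.continuousOn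
      (fun x hx => (hM.F_density_pos x hx).ne'))
  obtain ⟨Cφ, hCφ⟩ := (isCompact_Icc : IsCompact (Icc (0:ℝ) 1)).exists_bound_of_continuousOn hφcont
  have hCφ' : ∀ x ∈ Icc (0:ℝ) 1, |phi F x| ≤ Cφ := by simpa [Real.norm_eq_abs] using hCφ
  have hCφ0 : 0 ≤ Cφ := (abs_nonneg _).trans (hCφ' 0 mem01_0)
  refine ⟨g qc + Cφ * qc, ?_⟩
  rintro v ⟨q, hf, rfl⟩
  obtain ⟨ha, hmono, hcap⟩ := hf
  have hInt := virt_integrable hM ha hmono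
  have hIntC : IntervalIntegrable (fun θ => (g qc + Cφ * qc) * deriv F θ) volume 0 1 :=
    (continuous_const.mul hF').intervalIntegrable 0 1
  have hle : virtSurplus F g q ≤ ∫ θ in (0:ℝ)..1, (g qc + Cφ * qc) * deriv F θ := by
    apply intervalIntegral.integral_mono_on zero_le_one hInt hIntC
    intro θ hθ
    have hq0 : 0 ≤ q θ := ha.2 θ hθ
    have hqc' : q θ ≤ qc := hcap θ hθ
    have hF0 : 0 ≤ deriv F θ := (hM.F_density_pos θ hθ).le
    have h1 : g (q θ) ≤ g qc :=
      hM.g_mono.monotoneOn (mem_Ici.mpr hq0) (mem_Ici.mpr hqc) hqc'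
    have h2 : phi F θ * q θ ≤ Cφ * qc := by
      calc phi F θ * q θ ≤ |phi F θ| * q θ :=
            mul_le_mul_of_nonneg_right (le_abs_self _) hq0
        _ ≤ Cφ * qc := mul_le_mul (hCφ' θ hθ) hqc' hq0 hCφ0
    exact mul_le_mul_of_nonneg_right (add_le_add h1 h2) hF0
  calc virtSurplus F g q ≤ ∫ θ in (0:ℝ)..1, (g qc + Cφ * qc) * deriv F θ := hle
    _ = g qc + Cφ * qc := by
        rw [intervalIntegral.integral_const_mul,
          intervalIntegral.integral_deriv_eq_sub (fun x _ => hFd x) (hF'.intervalIntegrable 0 1),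
          hM.F_one, hM.F_zero]
        ring

end Stmt1Aux

/-- Lemma 1: decomposition. An allocation solves the monopolist
problem `𝒫^M` iff it solves the cap-constrained problem `𝒫(q^M)` for a quality `q^M`
maximizing `q̂ ↦ V(q̂) - c(q̂)` over `q̂ ≥ 0`. -/
theorem stmt1 (F g c : ℝ → ℝ) (hM : MainModel F g c) (q : ℝ → ℝ) :
    Monopolist F g c q ↔
      ∃ qM : ℝ, 0 ≤ qM ∧
        (∀ qhat : ℝ, 0 ≤ qhat → Vval F g qhat - c qhat ≤ Vval F g qM - c qM) ∧
        SolvesCap F g qM q := by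
  open Stmt1Aux in
  constructor
  · rintro ⟨t, ha, hic, hopt⟩
    have hmono : MonotoneOn q (Icc (0:ℝ) 1) := icir_mono hic
    set qM := sSup (q '' Icc (0:ℝ) 1) with hqMdef
    have hcap : ∀ θ ∈ Icc (0:ℝ) 1, q θ ≤ qM := fun θ hθ => le_sSup_img hmono hθ
    have hqM0 : 0 ≤ qM := sSup_img_nonneg ha hmono
    have hfeas : FeasibleCap qM q := ⟨ha, hmono, hcap⟩
    have hU0 : 0 ≤ g (q 0) + 0 * q 0 - t 0 := (hic 0 mem01_0).2
    have hrevq : (∫ θ in (0:ℝ)..1, t θ * deriv F θ) ≤ virtSurplus F g q := by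
      rw [revenue_eq hM ha hic]
      linarith
    have hdom : ∀ q' : ℝ → ℝ, IsAllocation q' → MonotoneOn q' (Icc (0:ℝ) 1) →
        virtSurplus F g q' - c (sSup (q' '' Icc (0:ℝ) 1)) ≤ virtSurplus F g q - c qM := by
      intro q' ha' hmono'
      obtain ⟨t', hic', hrev'⟩ := envelope hM ha' hmono'
      have hle := hopt q' t' ha' hic'
      rw [profit, profit, hrev', ← hqMdef] at hle
      linarith [hrevq, hle]
    refine ⟨qM, hqM0, ?_, hfeas, ?_⟩
    · intro qhat hqhat
      have hqle : virtSurplus F g q ≤ Vval F g qM :=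
        le_csSup (bddAbove_virtSet hM hqM0) ⟨q, hfeas, rfl⟩
      have hVle : Vval F g qhat ≤ virtSurplus F g q - c qM + c qhat := by
        apply csSup_le (virtset_nonempty hqhat)
        rintro v ⟨q', hf', rfl⟩
        obtain ⟨ha', hmono', hcap'⟩ := hf'
        have hd := hdom q' ha' hmono'
        have hs'0 : 0 ≤ sSup (q' '' Icc (0:ℝ) 1) := sSup_img_nonneg ha' hmono'
        have hs'le : sSup (q' '' Icc (0:ℝ) 1) ≤ qhat := sSup_img_le hcap'
        have hcm : c (sSup (q' '' Icc (0:ℝ) 1)) ≤ c qhat := c_le hM hs'0 hs'le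
        linarith
      linarith
    · intro q' hf'
      obtain ⟨ha', hmono', hcap'⟩ := hf'
      have hd := hdom q' ha' hmono'
      have hs'0 : 0 ≤ sSup (q' '' Icc (0:ℝ) 1) := sSup_img_nonneg ha' hmono'
      have hs'le : sSup (q' '' Icc (0:ℝ) 1) ≤ qM := sSup_img_le hcap'
      have hcm : c (sSup (q' '' Icc (0:ℝ) 1)) ≤ c qM := c_le hM hs'0 hs'le
      linarith
  · rintro ⟨qM, hqM0, hmax, hfeas, hsol⟩
    obtain ⟨ha, hmono, hcap⟩ := hfeas
    obtain ⟨t, hic, hrev⟩ := envelope hM ha hmono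
    refine ⟨t, ha, hic, ?_⟩
    intro q' t' ha' hic'
    have hmono' : MonotoneOn q' (Icc (0:ℝ) 1) := icir_mono hic'
    have hs'0 : 0 ≤ sSup (q' '' Icc (0:ℝ) 1) := sSup_img_nonneg ha' hmono'
    have hcap' : ∀ θ ∈ Icc (0:ℝ) 1, q' θ ≤ sSup (q' '' Icc (0:ℝ) 1) :=
      fun θ hθ => le_sSup_img hmono' hθ
    have hfeas' : FeasibleCap (sSup (q' '' Icc (0:ℝ) 1)) q' := ⟨ha', hmono', hcap'⟩
    have h1 : profit F c q' t' ≤ virtSurplus F g q' - c (sSup (q' '' Icc (0:ℝ) 1)) := by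
      rw [profit, revenue_eq hM ha' hic']
      have hU0' : 0 ≤ g (q' 0) + 0 * q' 0 - t' 0 := (hic' 0 mem01_0).2
      linarith
    have h2 : virtSurplus F g q' ≤ Vval F g (sSup (q' '' Icc (0:ℝ) 1)) :=
      le_csSup (bddAbove_virtSet hM hs'0) ⟨q', hfeas', rfl⟩
    have h3 : Vval F g (sSup (q' '' Icc (0:ℝ) 1)) - c (sSup (q' '' Icc (0:ℝ) 1))
        ≤ Vval F g qM - c qM := hmax _ hs'0
    have h4 : Vval F g qM = virtSurplus F g q := by
      apply le_antisymm
      · apply csSup_le (virtset_nonempty hqM0)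
        rintro v ⟨q'', hf'', rfl⟩
        exact hsol q'' hf''
      · exact le_csSup (bddAbove_virtSet hM hqM0) ⟨q, ⟨ha, hmono, hcap⟩, rfl⟩
    have h5 : c (sSup (q '' Icc (0:ℝ) 1)) ≤ c qM :=
      c_le hM (sSup_img_nonneg ha hmono) (sSup_img_le hcap)
    have h6 : profit F c q t = virtSurplus F g q - c (sSup (q '' Icc (0:ℝ) 1)) := by
      rw [profit, hrev]
    linarith
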